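/- arXiv:2601.17600 — 3 statements merged into one kernel-verified Lean document; each statement's English description precedes it below -/
import Mathlib

section
/- Let G be a group of nilpotency class at most 2 with R-exponentiation satisfying F0 ((gz)^α = g^α z^α for z central) and F3 ([g^α,h]=[g,h]^α), and such that α-commutators are central. If (xy)^{αβ} = ((xy)^α)^β and x^{αβ} = (x^α)^β for the relevant elements, then the α-commutator satisfies (g,h)_{αβ} = (g^α, h^α)_β · ((g,h)_α)^β for all g, h ∈ G and α, β ∈ R. -/
/-- The paper's commutator convention: [g,h] = g⁻¹h⁻¹gh. -/
def pcomm {G : Type*} [Group G] (g h : G) : G := g⁻¹ * h⁻¹ * g * h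

/-- The α-commutator (g,h)_α = h^{-α} g^{-α} (gh)^α, with g^{-α} := (g^α)⁻¹. -/
def acomm {G R : Type*} [Group G] (e : G → R → G) (g h : G) (α : R) : G :=
  (e h α)⁻¹ * (e g α)⁻¹ * e (g * h) α

/-- The c-commutator c(g,h)_α = [g,h]^{C(α,2)} (g,h)_α, where C2 α plays the role of C(α,2). -/
def ccomm {G R : Type*} [Group G] (e : G → R → G) (C2 : R → R) (g h : G) (α : R) : G :=
  e (pcomm g h) (C2 α) * acomm e g h α

theorem stmt5 {G R : Type*} [Group G] [CommRing R] (e : G → R → G)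
    (hnil : ∀ g h : G, pcomm g h ∈ Subgroup.center G)
    (hF0 : ∀ (g z : G), z ∈ Subgroup.center G → ∀ α : R, e (g * z) α = e g α * e z α)
    (hF3 : ∀ (g h : G) (α : R), pcomm (e g α) h = e (pcomm g h) α)
    (hcent : ∀ (g h : G) (α : R), acomm e g h α ∈ Subgroup.center G)
    (hadd : ∀ (g : G) (α β : R), e g (α + β) = e g α * e g β)
    (hmul : ∀ (g : G) (α β : R), e (e g α) β = e g (α * β)) :
    ∀ (g h : G) (α β : R),
      acomm e g h (α * β) = acomm e (e g α) (e h α) β * e (acomm e g h α) β := by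
  intro g h α β
  have key : ∀ (a b : G) (γ : R), e (a * b) γ = e a γ * e b γ * acomm e a b γ := by
    intro a b γ
    simp [acomm, mul_assoc]
  have h1 : e (g * h) (α * β)
      = e g (α * β) * e h (α * β) * acomm e (e g α) (e h α) β * e (acomm e g h α) β := by
    rw [← hmul (g * h) α β, key g h α, hF0 _ _ (hcent g h α) β, key (e g α) (e h α) β,
      hmul, hmul]
  simp only [acomm, h1]
  group
end

section
/- Let G be a group of nilpotency class at most 2 with R-exponentiation satisfying F3 (with α-commutators central). Then for all g, h, f ∈ G and α ∈ R, associativity of multiplication yields the cocycle relation on α-commutators: (gh, f)_α · (g, h)_α = (g, hf)_α · (h, f)_α. -/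
theorem stmt7 {G R : Type*} [Group G] [CommRing R] (e : G → R → G)
    (hnil : ∀ g h : G, pcomm g h ∈ Subgroup.center G)
    (hcent : ∀ (g h : G) (α : R), acomm e g h α ∈ Subgroup.center G) :
    ∀ (g h f : G) (α : R),
      acomm e (g * h) f α * acomm e g h α = acomm e g (h * f) α * acomm e h f α := by
  intro g h f α
  have aux : ∀ g h : G, e g α * e h α * acomm e g h α = e (g * h) α := by
    intro g h
    simp [acomm, mul_assoc]
  have hB := Subgroup.mem_center_iff.mp (hcent g h α)
  have hC := Subgroup.mem_center_iff.mp (hcent g (h * f) α)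
  have L : e g α * e h α * e f α * (acomm e (g * h) f α * acomm e g h α)
      = e (g * h * f) α := by
    calc e g α * e h α * e f α * (acomm e (g * h) f α * acomm e g h α)
        = e g α * e h α * (e f α * acomm e (g * h) f α * acomm e g h α) := by group
      _ = e g α * e h α * (acomm e g h α * (e f α * acomm e (g * h) f α)) := by rw [hB]
      _ = e g α * e h α * acomm e g h α * (e f α * acomm e (g * h) f α) := by group
      _ = e (g * h) α * (e f α * acomm e (g * h) f α) := by rw [aux]
      _ = e (g * h) α * e f α * acomm e (g * h) f α := by group
      _ = e (g * h * f) α := aux _ _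
  have Rr : e g α * e h α * e f α * (acomm e g (h * f) α * acomm e h f α)
      = e (g * (h * f)) α := by
    rw [← hC]
    calc e g α * e h α * e f α * (acomm e h f α * acomm e g (h * f) α)
        = e g α * (e h α * e f α * acomm e h f α) * acomm e g (h * f) α := by group
      _ = e g α * e (h * f) α * acomm e g (h * f) α := by rw [aux]
      _ = e (g * (h * f)) α := aux _ _
  apply mul_left_cancel (a := e g α * e h α * e f α)
  rw [L, Rr, mul_assoc]
end

section
/- Let G be a group of nilpotency class at most 2, R a commutative ring, and suppose the R-exponentiation satisfies F0 ((gz)^α = g^α z^α for central z), F3, and the ring axioms 2.1–2.2 restricted to products. Then the commutativity of R forces the c-commutator identity c(f,h)_α^β · c(f^α, h^α)_β = c(f,h)_β^α · c(f^β, h^β)_α for all f, h ∈ G, α, β ∈ R, where c-commutator exponents are taken in the central R-module Z(G). -/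
lemma pcomm_eq_one_comm {G : Type*} [Group G] {a b : G} (h : pcomm a b = 1) :
    a * b = b * a := by
  have h' : a⁻¹ * b⁻¹ * a * b = 1 := h
  calc a * b = b * a * (a⁻¹ * b⁻¹ * a * b) := by group
    _ = b * a := by rw [h', mul_one]

lemma pcomm_inv {G : Type*} [Group G] (a b : G) : pcomm a b = (pcomm b a)⁻¹ := by
  unfold pcomm; group

theorem stmt10 {G R : Type*} [Group G] [CommRing R] (e : G → R → G) (C2 : R → R)
    (hC2 : ∀ α : R, C2 α + C2 α = α * α - α)
    (hnil : ∀ g h : G, pcomm g h ∈ Subgroup.center G)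
    (hF0 : ∀ (g z : G), z ∈ Subgroup.center G → ∀ α : R, e (g * z) α = e g α * e z α)
    (hF3 : ∀ (g h : G) (α : R), pcomm (e g α) h = e (pcomm g h) α)
    (hcent : ∀ (g h : G) (α : R), acomm e g h α ∈ Subgroup.center G)
    (hadd : ∀ (g : G) (α β : R), e g (α + β) = e g α * e g β)
    (hmul : ∀ (g : G) (α β : R), e (e g α) β = e g (α * β))
    (hzadd : ∀ z : G, z ∈ Subgroup.center G → ∀ α β : R, e z (α + β) = e z α * e z β)
    (hzmul : ∀ z : G, z ∈ Subgroup.center G → ∀ α β : R, e (e z α) β = e z (α * β)) :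
    ∀ (f h : G) (α β : R),
      e (ccomm e C2 f h α) β * ccomm e C2 (e f α) (e h α) β =
        e (ccomm e C2 f h β) α * ccomm e C2 (e f β) (e h β) α := by
  intro f h α β
  have hw : pcomm f h ∈ Subgroup.center G := hnil f h
  -- e 1 γ = 1
  have e1 : ∀ γ : R, e 1 γ = 1 := by
    intro γ
    have h1 := hF0 1 1 (Subgroup.one_mem _) γ
    rw [one_mul] at h1
    exact left_eq_mul.mp h1
  -- pcomm with a central element vanishes
  have pcz : ∀ z : G, z ∈ Subgroup.center G → ∀ g : G, pcomm z g = 1 := by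
    intro z hz g
    have hcomm : g * z = z * g := Subgroup.mem_center_iff.mp hz g
    unfold pcomm
    rw [mul_assoc, ← hcomm]
    group
  -- e of a central element is central
  have ecent : ∀ z : G, z ∈ Subgroup.center G → ∀ γ : R, e z γ ∈ Subgroup.center G := by
    intro z hz γ
    rw [Subgroup.mem_center_iff]
    intro g
    have h1 : pcomm (e z γ) g = 1 := by rw [hF3, pcz z hz g, e1]
    exact (pcomm_eq_one_comm h1).symm
  -- e of inverse of central element
  have einv : ∀ z : G, z ∈ Subgroup.center G → ∀ γ : R, e z⁻¹ γ = (e z γ)⁻¹ := by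
    intro z hz γ
    have h1 := hF0 z z⁻¹ (Subgroup.inv_mem _ hz) γ
    rw [mul_inv_cancel, e1] at h1
    exact (eq_inv_of_mul_eq_one_right h1.symm)
  -- expansion law
  have hexp : ∀ (g k : G) (γ : R), e (g * k) γ = e g γ * e k γ * acomm e g k γ := by
    intro g k γ
    unfold acomm
    group
  -- square law for commutators of exponentials
  have hcsq : ∀ γ : R, pcomm (e f γ) (e h γ) = e (pcomm f h) (γ * γ) := by
    intro γ
    have h1 : pcomm (e h γ) f = (e (pcomm f h) γ)⁻¹ := by
      rw [hF3, show pcomm h f = (pcomm f h)⁻¹ from pcomm_inv h f, einv _ hw γ]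
    have h2 : pcomm f (e h γ) = e (pcomm f h) γ := by
      rw [pcomm_inv f (e h γ), h1, inv_inv]
    rw [hF3, h2, hzmul _ hw]
  -- key acomm multiplicativity
  have hB : ∀ γ δ : R, acomm e f h (γ * δ) =
      e (acomm e f h γ) δ * acomm e (e f γ) (e h γ) δ := by
    intro γ δ
    have h1 : e (f * h) (γ * δ) = e f (γ * δ) * e h (γ * δ) * acomm e f h (γ * δ) :=
      hexp f h (γ * δ)
    have h2 : e (f * h) (γ * δ) = e f (γ * δ) * e h (γ * δ) *
        (e (acomm e f h γ) δ * acomm e (e f γ) (e h γ) δ) := by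
      rw [← hmul (f * h) γ δ, hexp f h γ, hF0 _ _ (hcent f h γ) δ, hexp (e f γ) (e h γ) δ,
        hmul f, hmul h, mul_assoc (e f (γ * δ) * e h (γ * δ)),
        ← Subgroup.mem_center_iff.mp (hcent (e f γ) (e h γ) δ) (e (acomm e f h γ) δ)]
    exact mul_left_cancel (h1.symm.trans h2)
  -- central swap
  have swap : ∀ a : G, a ∈ Subgroup.center G → ∀ p q b : G,
      (p * a) * (q * b) = (p * q) * (a * b) := by
    intro a ha p q b
    have hq : q * a = a * q := Subgroup.mem_center_iff.mp ha q
    calc (p * a) * (q * b) = p * ((a * q) * b) := by group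
      _ = p * ((q * a) * b) := by rw [hq]
      _ = (p * q) * (a * b) := by group
  -- the normal form of each side
  have key : ∀ γ δ : R, e (ccomm e C2 f h γ) δ * ccomm e C2 (e f γ) (e h γ) δ =
      e (pcomm f h) (C2 γ * δ + γ * γ * C2 δ) * acomm e f h (γ * δ) := by
    intro γ δ
    unfold ccomm
    rw [hF0 _ _ (hcent f h γ) δ, hzmul _ hw, hcsq γ, hzmul _ hw,
      swap _ (ecent _ (hcent f h γ) δ), ← hzadd _ hw, ← hB]
  rw [key α β, key β α]
  have hr : C2 α * β + α * α * C2 β = C2 β * α + β * β * C2 α := by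
    linear_combination C2 α * hC2 β - C2 β * hC2 α
  rw [hr, mul_comm α β]
end
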